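/- For Λ₊ ∈ V₂, define the vertical space vert_{Λ₊} := {[a, Λ₊] : a ∈ g₀^{Λ₀}} ⊂ T_{Λ₊}V₂ and the map YM1(Λ₊, Γ₊) := [Λ₊, c(Γ₊)] + [c(Λ₊), Γ₊] ∈ g₀^{Λ₀}. Then the orthogonal complement of vert_{Λ₊} in T_{Λ₊}V₂ (with respect to the compact-real-form inner product) equals {Γ₊ ∈ T_{Λ₊}V₂ : YM1(Λ₊, Γ₊) = 0}. That is, Γ₊ ⊥ [a,Λ₊] for all a ∈ g₀^{Λ₀} if and only if YM1(Λ₊,Γ₊) = 0. -/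

import Mathlib

open Finset in
lemma aux_conj_trace {L : Type*} [AddCommGroup L] [Module ℂ L] [Module.Finite ℂ L]
    (c : L → L)
    (hc_add : ∀ x y : L, c (x + y) = c x + c y)
    (hc_smul : ∀ (a : ℂ) (x : L), c (a • x) = (starRingEnd ℂ a) • c x)
    (hc_inv : ∀ x : L, c (c x) = x)
    (A F : L →ₗ[ℂ] L) (hFA : ∀ z, F z = c (A (c z))) :
    LinearMap.trace ℂ L F = starRingEnd ℂ (LinearMap.trace ℂ L A) := by
  classical
  have hc0 : c 0 = 0 := by simpa using hc_smul 0 0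
  let cAdd : L →+ L := AddMonoidHom.mk' c hc_add
  let ι := Module.Free.ChooseBasisIndex ℂ L
  let b : Module.Basis ι ℂ L := Module.Free.chooseBasis ℂ L
  have hsum : ∀ (s : Finset ι) (f : ι → L),
      c (∑ i ∈ s, f i) = ∑ i ∈ s, c (f i) := by
    intro s f
    exact map_sum cAdd f s
  have hli : LinearIndependent ℂ (fun i : ι => c (b i)) := by
    rw [linearIndependent_iff']
    intro s g hg i hi
    have h2 : (∑ j ∈ s, (starRingEnd ℂ) (g j) • b j) = 0 := by
      have := congrArg c hg
      rw [hsum, hc0] at this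
      rw [← this]
      refine Finset.sum_congr rfl fun j _ => ?_
      rw [hc_smul, hc_inv]
    have := linearIndependent_iff'.mp b.linearIndependent s
      (fun j => (starRingEnd ℂ) (g j)) h2 i hi
    simpa using this
  have hsp : ⊤ ≤ Submodule.span ℂ (Set.range fun i : ι => c (b i)) := by
    intro x _
    have hx : x = ∑ i, (starRingEnd ℂ) (b.repr (c x) i) • c (b i) := by
      conv_lhs => rw [← hc_inv x, ← Module.Basis.sum_repr b (c x)]
      rw [hsum]
      refine Finset.sum_congr rfl fun j _ => ?_
      rw [hc_smul]
    rw [hx]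
    exact Submodule.sum_mem _ fun i _ =>
      Submodule.smul_mem _ _ (Submodule.subset_span ⟨i, rfl⟩)
  let b' : Module.Basis ι ℂ L := Module.Basis.mk hli hsp
  have hb' : ∀ i, b' i = c (b i) := fun i => Module.Basis.mk_apply hli hsp i
  rw [LinearMap.trace_eq_matrix_trace ℂ b A, LinearMap.trace_eq_matrix_trace ℂ b' F,
    Matrix.trace, Matrix.trace, map_sum]
  refine Finset.sum_congr rfl fun i _ => ?_
  rw [Matrix.diag_apply, Matrix.diag_apply, LinearMap.toMatrix_apply,
    LinearMap.toMatrix_apply]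
  have hF : F (b' i) = ∑ j, (starRingEnd ℂ) (b.repr (A (b i)) j) • b' j := by
    rw [hFA, hb' i, hc_inv]
    conv_lhs => rw [← Module.Basis.sum_repr b (A (b i))]
    rw [hsum]
    refine Finset.sum_congr rfl fun j _ => ?_
    rw [hc_smul, hb' j]
  rw [hF, Module.Basis.repr_sum_self]

lemma aux_killing_conj {L : Type*} [LieRing L] [LieAlgebra ℂ L] [Module.Finite ℂ L]
    (c : L → L)
    (hc_add : ∀ x y : L, c (x + y) = c x + c y)
    (hc_smul : ∀ (a : ℂ) (x : L), c (a • x) = (starRingEnd ℂ a) • c x)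
    (hc_bracket : ∀ x y : L, c ⁅x, y⁆ = ⁅c x, c y⁆)
    (hc_inv : ∀ x : L, c (c x) = x)
    (x y : L) :
    killingForm ℂ L (c x) (c y) = starRingEnd ℂ (killingForm ℂ L x y) := by
  rw [killingForm_apply_apply, killingForm_apply_apply]
  refine aux_conj_trace c hc_add hc_smul hc_inv _ _ fun z => ?_
  show ⁅c x, ⁅c y, z⁆⁆ = c ⁅x, ⁅y, c z⁆⁆
  rw [hc_bracket, hc_bracket, hc_inv]

/-- For `Λ₊ ∈ V₂`, a tangent vector `Γ₊ ∈ T_{Λ₊}V₂ ≅ V₂` is orthogonal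
(for the compact-real-form inner product `⟨X|Y⟩ = −Re κ(c X, Y)`) to the vertical
space `vert_{Λ₊} = {[a,Λ₊] : a ∈ g₀^{Λ₀}}` (where `g₀^{Λ₀} = {a : c a = a, [Λ₀,a]=0}`)
if and only if `YM1(Λ₊,Γ₊) := [Λ₊, c Γ₊] + [c Λ₊, Γ₊] = 0`.  That is, the horizontal
space is exactly the kernel of the first-order Yang–Mills constraint. -/
theorem stmt12
    (L : Type*) [LieRing L] [LieAlgebra ℂ L] [Module.Finite ℂ L]
    [LieAlgebra.IsSemisimple ℂ L]
    (c : L → L)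
    (hc_add : ∀ x y : L, c (x + y) = c x + c y)
    (hc_smul : ∀ (a : ℂ) (x : L), c (a • x) = (starRingEnd ℂ a) • c x)
    (hc_bracket : ∀ x y : L, c ⁅x, y⁆ = ⁅c x, c y⁆)
    (hc_inv : ∀ x : L, c (c x) = x)
    (hcompact : ∀ x : L, c x = x → x ≠ 0 → (killingForm ℂ L x x).re < 0)
    (B : L → L → ℝ)
    (hB : ∀ X Y : L, B X Y = -(killingForm ℂ L (c X) Y).re)
    (Λ₀ : L) (hΛ₀c : c Λ₀ = -Λ₀)
    (Λp Γp : L)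
    (hΛp : ⁅Λ₀, Λp⁆ = (2 : ℂ) • Λp)
    (hΓp : ⁅Λ₀, Γp⁆ = (2 : ℂ) • Γp) :
    (∀ a : L, c a = a → ⁅Λ₀, a⁆ = 0 → B ⁅a, Λp⁆ Γp = 0) ↔
      ⁅Λp, c Γp⁆ + ⁅c Λp, Γp⁆ = 0 := by
  have hconj : ∀ x y : L, killingForm ℂ L (c x) (c y) = starRingEnd ℂ (killingForm ℂ L x y) :=
    aux_killing_conj c hc_add hc_smul hc_bracket hc_inv
  have hinv : ∀ x y z : L, killingForm ℂ L ⁅x, y⁆ z = killingForm ℂ L x ⁅y, z⁆ :=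
    fun x y z => LieModule.traceForm_apply_lie_apply ℂ L L x y z
  set D : L := ⁅Λp, c Γp⁆ + ⁅c Λp, Γp⁆ with hD
  -- key identity: 2 * B ⁅a,Λp⁆ Γp = B a D for c-fixed a
  have key : ∀ a : L, c a = a → 2 * B ⁅a, Λp⁆ Γp = B a D := by
    intro a hca
    have h1 : B ⁅a, Λp⁆ Γp = -(killingForm ℂ L a ⁅c Λp, Γp⁆).re := by
      rw [hB, hc_bracket, hca, hinv]
    have h2 : (killingForm ℂ L a ⁅Λp, c Γp⁆).re = (killingForm ℂ L a ⁅c Λp, Γp⁆).re := by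
      have := hconj a ⁅Λp, c Γp⁆
      rw [hca, hc_bracket, hc_inv] at this
      rw [this, Complex.conj_re]
    have h3 : B a D = -(killingForm ℂ L a ⁅Λp, c Γp⁆).re -
        (killingForm ℂ L a ⁅c Λp, Γp⁆).re := by
      rw [hB, hca, hD, map_add, Complex.add_re]
      ring
    rw [h1, h3, h2]; ring
  constructor
  · intro H
    by_contra hD0
    have hcD : c D = D := by
      rw [hD, hc_add, hc_bracket, hc_bracket, hc_inv, hc_inv, add_comm]
    have hΛ₀D : ⁅Λ₀, D⁆ = 0 := by
      have h2c : (starRingEnd ℂ) (2 : ℂ) = 2 := by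
        rw [Complex.ext_iff]; constructor <;> simp
      have hcΓ : ⁅Λ₀, c Γp⁆ = -((2 : ℂ) • c Γp) := by
        have h := hc_bracket Λ₀ Γp
        rw [hΓp, hΛ₀c, neg_lie, hc_smul, h2c] at h
        rw [h, neg_neg]
      have hcΛ : ⁅Λ₀, c Λp⁆ = -((2 : ℂ) • c Λp) := by
        have h := hc_bracket Λ₀ Λp
        rw [hΛp, hΛ₀c, neg_lie, hc_smul, h2c] at h
        rw [h, neg_neg]
      rw [hD, lie_add, leibniz_lie Λ₀ Λp (c Γp), leibniz_lie Λ₀ (c Λp) Γp,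
        hΛp, hΓp, hcΓ, hcΛ]
      simp only [smul_lie, lie_smul, lie_neg, neg_lie, smul_neg]
      abel
    have h0 := H D hcD hΛ₀D
    have hk := key D hcD
    rw [h0, mul_zero] at hk
    have hBD : B D D = -(killingForm ℂ L D D).re := by rw [hB, hcD]
    have hne : D ≠ 0 := hD0
    have := hcompact D hcD hne
    rw [← hk] at hBD
    linarith
  · intro h0 a hca _
    have hk := key a hca
    rw [h0] at hk
    have : B a 0 = 0 := by
      rw [hB]
      simp
    rw [this] at hk
    linarith
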